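/- arXiv:1908.03549 — 4 statements merged into one kernel-verified Lean document; each statement's English description precedes it below -/
import Mathlib

section
/- Let R be a commutative ring with nilradical nil(R), let F be an element of the polynomial ring R[Z_1,...,Z_n], and let F̄ denote the image of F in (R/nil(R))[Z_1,...,Z_n]. Then F is a coordinate of R[Z_1,...,Z_n] over R if and only if F̄ is a coordinate of (R/nil(R))[Z_1,...,Z_n] over R/nil(R). -/
/-- `F` is a coordinate of the polynomial ring `R[Z_1,…,Z_n]` over `R`. -/
def IsCoordinate {R : Type*} [CommRing R] {n : ℕ} (F : MvPolynomial (Fin n) R) : Prop :=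
  ∃ (e : MvPolynomial (Fin n) R ≃ₐ[R] MvPolynomial (Fin n) R) (i : Fin n),
    e (MvPolynomial.X i) = F

/-- `F` is a residual coordinate of `R[Z_1,…,Z_n]`. -/
def IsResidualCoordinate {R : Type*} [CommRing R] {n : ℕ} (F : MvPolynomial (Fin n) R) : Prop :=
  ∀ (p : Ideal R) (_ : p.IsPrime),
    IsCoordinate (MvPolynomial.map
      (algebraMap R (IsLocalRing.ResidueField (Localization.AtPrime p))) F)

/-- `δ` is an `R`-linear exponential map `A → A[W]`. -/
def IsExpMap {R A : Type*} [CommRing R] [CommRing A] [Algebra R A]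
    (δ : A →ₐ[R] Polynomial A) : Prop :=
  (∀ a : A, (δ a).eval 0 = a) ∧
  ∀ a : A, (δ a).map (δ : A →+* Polynomial A) =
    Polynomial.eval₂ ((Polynomial.C).comp (Polynomial.C : A →+* Polynomial A))
      (Polynomial.X + Polynomial.C Polynomial.X) (δ a)

/-- A (reduced) ring is seminormal. -/
def IsSeminormalRing (R : Type*) [CommRing R] : Prop :=
  ∀ b c : R, b ^ 3 = c ^ 2 → ∃ a : R, a ^ 2 = b ∧ a ^ 3 = c

section Stmt0Aux


open MvPolynomial

variable {R : Type*} [CommRing R] {n : ℕ}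

local notation "A" => MvPolynomial (Fin n) R

private lemma d_mem (θ : A →ₐ[R] A) (I : Ideal R)
    (hX : ∀ j, θ (X j) - X j ∈ I.map (C : R →+* A)) (a : A) :
    θ a - a ∈ I.map (C : R →+* A) := by
  induction a using MvPolynomial.induction_on with
  | C r =>
    have : θ (C r) = C r := θ.commutes r
    simp [this]
  | add p q hp hq =>
    have h : θ (p + q) - (p + q) = (θ p - p) + (θ q - q) := by rw [map_add]; ring
    rw [h]; exact add_mem hp hq
  | mul_X p j hp =>
    have h : θ (p * X j) - p * X j = θ p * (θ (X j) - X j) + X j * (θ p - p) := by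
      rw [map_mul]; ring
    rw [h]
    exact add_mem (Ideal.mul_mem_left _ _ (hX j)) (Ideal.mul_mem_left _ _ hp)

private lemma d_mem_mul (θ : A →ₐ[R] A) (I J : Ideal R)
    (hX : ∀ j, θ (X j) - X j ∈ I.map (C : R →+* A)) (a : A)
    (ha : ∀ m, coeff m a ∈ J) :
    θ a - a ∈ (J.map (C : R →+* A)) * (I.map (C : R →+* A)) := by
  have hsplit : θ a - a = ∑ m ∈ a.support,
      (θ (monomial m (coeff m a)) - monomial m (coeff m a)) := by
    conv_lhs => rw [← support_sum_monomial_coeff a]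
    rw [map_sum, ← Finset.sum_sub_distrib]
  rw [hsplit]
  refine Submodule.sum_mem _ (fun m _ => ?_)
  have hmono : (monomial m (coeff m a) : A) = C (coeff m a) * monomial m 1 := by
    rw [C_mul_monomial, mul_one]
  have h : θ (monomial m (coeff m a)) - monomial m (coeff m a)
      = C (coeff m a) * (θ (monomial m 1) - monomial m 1) := by
    rw [hmono, show θ (C (coeff m a) * monomial m 1)
        = C (coeff m a) * θ (monomial m 1) by
      rw [map_mul, show θ (C (coeff m a)) = C (coeff m a) from θ.commutes _]]
    ring
  rw [h]
  exact Ideal.mul_mem_mul (Ideal.mem_map_of_mem _ (ha m)) (d_mem θ I hX _)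

private lemma bij_of_nilpotent (θ : A →ₐ[R] A) (I : Ideal R) (k : ℕ) (hk : I ^ k = ⊥)
    (hX : ∀ j, θ (X j) - X j ∈ I.map (C : R →+* A)) :
    Function.Bijective θ := by
  constructor
  · rw [injective_iff_map_eq_zero]
    intro a ha
    have key : ∀ s : ℕ, a ∈ (I ^ s).map (C : R →+* A) := by
      intro s
      induction s with
      | zero => simp [Ideal.one_eq_top, Ideal.map_top]
      | succ s ih =>
        have hd := d_mem_mul θ I (I ^ s) hX a (fun m => mem_map_C_iff.mp ih m)
        have h : a = -(θ a - a) := by rw [ha]; ring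
        rw [h, pow_succ, Ideal.map_mul]
        exact neg_mem hd
    have := key k
    rwa [hk, Ideal.map_bot, Ideal.mem_bot] at this
  · intro a
    have key : ∀ s : ℕ, ∃ b, a - θ b ∈ (I ^ s).map (C : R →+* A) := by
      intro s
      induction s with
      | zero => exact ⟨0, by simp [Ideal.one_eq_top, Ideal.map_top]⟩
      | succ s ih =>
        obtain ⟨b, hb⟩ := ih
        have hd := d_mem_mul θ I (I ^ s) hX (a - θ b) (fun m => mem_map_C_iff.mp hb m)
        refine ⟨b + (a - θ b), ?_⟩
        have h : a - θ (b + (a - θ b)) = -(θ (a - θ b) - (a - θ b)) := by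
          rw [map_add]; ring
        rw [h, pow_succ, Ideal.map_mul]
        exact neg_mem hd
    obtain ⟨b, hb⟩ := key k
    rw [hk, Ideal.map_bot, Ideal.mem_bot, sub_eq_zero] at hb
    exact ⟨b, hb.symm⟩

private lemma map_aeval_comm (G : Fin n → A) (p : A) :
    MvPolynomial.map (Ideal.Quotient.mk (nilradical R)) (aeval G p)
      = aeval (fun j => MvPolynomial.map (Ideal.Quotient.mk (nilradical R)) (G j))
          (MvPolynomial.map (Ideal.Quotient.mk (nilradical R)) p) := by
  induction p using MvPolynomial.induction_on with
  | C r => simp only [aeval_C, map_C, algebraMap_eq, aeval_C]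
  | add p q hp hq => simp only [map_add, hp, hq]
  | mul_X p j hp => simp only [map_mul, map_X, aeval_X, hp]

private lemma aeval_equiv_X {S : Type*} [CommRing S] {m : ℕ}
    (f : MvPolynomial (Fin m) S ≃ₐ[S] MvPolynomial (Fin m) S) (p : MvPolynomial (Fin m) S) :
    aeval (fun j => f (X j)) p = f p := by
  induction p using MvPolynomial.induction_on with
  | C r => rw [aeval_C]; exact (f.commutes r).symm
  | add p q hp hq => simp only [map_add, hp, hq]
  | mul_X p j hp => simp only [map_mul, aeval_X, hp]

theorem stmt0'  {R : Type*} [CommRing R] {n : ℕ} (F : MvPolynomial (Fin n) R) :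
    (∃ (e : MvPolynomial (Fin n) R ≃ₐ[R] MvPolynomial (Fin n) R) (i : Fin n),
      e (MvPolynomial.X i) = F) ↔
      (∃ (e : MvPolynomial (Fin n) (R ⧸ nilradical R) ≃ₐ[R ⧸ nilradical R]
          MvPolynomial (Fin n) (R ⧸ nilradical R)) (i : Fin n),
        e (MvPolynomial.X i) = MvPolynomial.map (Ideal.Quotient.mk (nilradical R)) F) := by
  classical
  have hE : ∀ (f : MvPolynomial (Fin n) R ≃ₐ[R] MvPolynomial (Fin n) R)
      (p : MvPolynomial (Fin n) R),
      aeval (fun j => MvPolynomial.map (Ideal.Quotient.mk (nilradical R)) (f (X j)))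
          (MvPolynomial.map (Ideal.Quotient.mk (nilradical R)) p)
        = MvPolynomial.map (Ideal.Quotient.mk (nilradical R)) (f p) := by
    intro f p
    rw [← map_aeval_comm, aeval_equiv_X]
  constructor
  · rintro ⟨e, i, he⟩
    refine ⟨AlgEquiv.ofAlgHom
      (aeval fun j => MvPolynomial.map (Ideal.Quotient.mk (nilradical R)) (e (X j)))
      (aeval fun j => MvPolynomial.map (Ideal.Quotient.mk (nilradical R)) (e.symm (X j)))
      ?_ ?_, i, ?_⟩
    · apply MvPolynomial.algHom_ext
      intro j
      simp only [AlgHom.comp_apply, aeval_X, AlgHom.id_apply]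
      rw [hE e]
      simp
    · apply MvPolynomial.algHom_ext
      intro j
      simp only [AlgHom.comp_apply, aeval_X, AlgHom.id_apply]
      rw [hE e.symm]
      simp
    · simp [he]
  · rintro ⟨eb, i, he⟩
    have hmksurj : Function.Surjective
        (MvPolynomial.map (Ideal.Quotient.mk (nilradical R)) :
          MvPolynomial (Fin n) R → MvPolynomial (Fin n) (R ⧸ nilradical R)) :=
      MvPolynomial.map_surjective _ Ideal.Quotient.mk_surjective
    choose lift hlift using hmksurj
    set G : Fin n → MvPolynomial (Fin n) R := fun j => if j = i then F else lift (eb (X j))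
      with hGdef
    set H : Fin n → MvPolynomial (Fin n) R := fun j => lift (eb.symm (X j)) with hHdef
    have hGspec : ∀ j, MvPolynomial.map (Ideal.Quotient.mk (nilradical R)) (G j) = eb (X j) := by
      intro j
      by_cases hj : j = i
      · subst hj; simp [hGdef, he]
      · simp [hGdef, hj, hlift]
    have hHspec : ∀ j, MvPolynomial.map (Ideal.Quotient.mk (nilradical R)) (H j)
        = eb.symm (X j) := fun j => hlift _
    set φ : MvPolynomial (Fin n) R →ₐ[R] MvPolynomial (Fin n) R := aeval G with hφdef
    set ψ : MvPolynomial (Fin n) R →ₐ[R] MvPolynomial (Fin n) R := aeval H with hψdef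
    have hφ : ∀ p, MvPolynomial.map (Ideal.Quotient.mk (nilradical R)) (φ p)
        = aeval (fun j => eb (X j)) (MvPolynomial.map (Ideal.Quotient.mk (nilradical R)) p) := by
      intro p
      rw [hφdef, map_aeval_comm]
      simp only [hGspec]
    have hψ : ∀ p, MvPolynomial.map (Ideal.Quotient.mk (nilradical R)) (ψ p)
        = aeval (fun j => eb.symm (X j))
            (MvPolynomial.map (Ideal.Quotient.mk (nilradical R)) p) := by
      intro p
      rw [hψdef, map_aeval_comm]
      simp only [hHspec]
    have hred : ∀ j, MvPolynomial.map (Ideal.Quotient.mk (nilradical R)) ((ψ.comp φ) (X j))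
        = MvPolynomial.map (Ideal.Quotient.mk (nilradical R)) (X j) := by
      intro j
      rw [AlgHom.comp_apply, hψ, hφ, map_X, aeval_X, aeval_equiv_X]
      simp
    have hred' : ∀ j, MvPolynomial.map (Ideal.Quotient.mk (nilradical R)) ((φ.comp ψ) (X j))
        = MvPolynomial.map (Ideal.Quotient.mk (nilradical R)) (X j) := by
      intro j
      rw [AlgHom.comp_apply, hφ, hψ, map_X, aeval_X, aeval_equiv_X]
      simp
    set N : Fin n → MvPolynomial (Fin n) R := fun j => (ψ.comp φ) (X j) - X j with hNdef
    set N' : Fin n → MvPolynomial (Fin n) R := fun j => (φ.comp ψ) (X j) - X j with hN'def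
    have hNnil : ∀ j m, coeff m (N j) ∈ nilradical R := by
      intro j m
      have h0 : MvPolynomial.map (Ideal.Quotient.mk (nilradical R)) (N j) = 0 := by
        rw [hNdef]; simp only [map_sub, hred, sub_self]
      rw [← Ideal.Quotient.eq_zero_iff_mem, ← coeff_map, h0, coeff_zero]
    have hN'nil : ∀ j m, coeff m (N' j) ∈ nilradical R := by
      intro j m
      have h0 : MvPolynomial.map (Ideal.Quotient.mk (nilradical R)) (N' j) = 0 := by
        rw [hN'def]; simp only [map_sub, hred', sub_self]
      rw [← Ideal.Quotient.eq_zero_iff_mem, ← coeff_map, h0, coeff_zero]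
    set S : Finset R := Finset.univ.biUnion (fun j : Fin n =>
      ((N j).support.image fun m => coeff m (N j))
        ∪ ((N' j).support.image fun m => coeff m (N' j))) with hSdef
    set I : Ideal R := Ideal.span (S : Set R) with hIdef
    have hIfg : I.FG := ⟨S, rfl⟩
    have hInil : I ≤ nilradical R := by
      rw [hIdef, Ideal.span_le]
      intro r hr
      simp only [hSdef, Finset.coe_biUnion, Finset.coe_union, Finset.coe_image,
        Set.mem_iUnion, Set.mem_union, Set.mem_image, Finset.mem_coe] at hr
      obtain ⟨j, _, h⟩ := hr
      rcases h with ⟨m, _, rfl⟩ | ⟨m, _, rfl⟩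
      · exact hNnil j m
      · exact hN'nil j m
    obtain ⟨k, hk⟩ := Ideal.exists_pow_le_of_le_radical_of_fg
      (J := (⊥ : Ideal R)) (show I ≤ Ideal.radical ⊥ from hInil) hIfg
    have hk' : I ^ k = ⊥ := le_bot_iff.mp hk
    have hmem : ∀ j, (ψ.comp φ) (X j) - X j ∈ I.map (C : R →+* MvPolynomial (Fin n) R) := by
      intro j
      rw [mem_map_C_iff]
      intro m
      by_cases hm : m ∈ (N j).support
      · apply Ideal.subset_span
        simp only [hSdef, Finset.coe_biUnion, Finset.coe_union, Finset.coe_image,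
          Set.mem_iUnion, Set.mem_union, Set.mem_image, Finset.mem_coe]
        exact ⟨j, Finset.mem_univ j, Or.inl ⟨m, hm, rfl⟩⟩
      · rw [notMem_support_iff] at hm
        rw [show (ψ.comp φ) (X j) - X j = N j from rfl, hm]
        exact zero_mem _
    have hmem' : ∀ j, (φ.comp ψ) (X j) - X j ∈ I.map (C : R →+* MvPolynomial (Fin n) R) := by
      intro j
      rw [mem_map_C_iff]
      intro m
      by_cases hm : m ∈ (N' j).support
      · apply Ideal.subset_span
        simp only [hSdef, Finset.coe_biUnion, Finset.coe_union, Finset.coe_image,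
          Set.mem_iUnion, Set.mem_union, Set.mem_image, Finset.mem_coe]
        exact ⟨j, Finset.mem_univ j, Or.inr ⟨m, hm, rfl⟩⟩
      · rw [notMem_support_iff] at hm
        rw [show (φ.comp ψ) (X j) - X j = N' j from rfl, hm]
        exact zero_mem _
    have hbij := bij_of_nilpotent (ψ.comp φ) I k hk' hmem
    have hbij' := bij_of_nilpotent (φ.comp ψ) I k hk' hmem'
    have hinj : Function.Injective φ := by
      have := hbij.1
      rw [AlgHom.coe_comp] at this
      exact Function.Injective.of_comp this
    have hsurj : Function.Surjective φ := by
      have := hbij'.2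
      rw [AlgHom.coe_comp] at this
      exact Function.Surjective.of_comp this
    refine ⟨AlgEquiv.ofBijective φ ⟨hinj, hsurj⟩, i, ?_⟩
    show φ (X i) = F
    simp [hφdef, hGdef]

end Stmt0Aux

/-- `F` is a coordinate over `R` iff its image is a coordinate over `R/nil(R)`. -/
theorem stmt0 {R : Type*} [CommRing R] {n : ℕ} (F : MvPolynomial (Fin n) R) :
    IsCoordinate F ↔
      IsCoordinate (MvPolynomial.map (Ideal.Quotient.mk (nilradical R)) F) :=
  stmt0' F
end

section
/- Let R be a commutative ring, M and N finitely generated R-modules. Then the symmetric algebras Sym_R(M) and Sym_R(N) are isomorphic as R-algebras if and only if M and N are isomorphic as R-modules. -/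
universe u v w

/-- `ι : M →ₗ[R] A` exhibits the commutative `R`-algebra `A` as the symmetric algebra of the
`R`-module `M`, via the universal property. -/
def IsSymmetricAlgebraUP {R : Type u} [CommRing R] {M : Type v} [AddCommGroup M] [Module R M]
    {A : Type w} [CommRing A] [Algebra R A] (ι : M →ₗ[R] A) : Prop :=
  ∀ (B : Type (max u v w)) [CommRing B] [Algebra R B] (f : M →ₗ[R] B),
    ∃! g : A →ₐ[R] B, ∀ m : M, g (ι m) = f m

def uliftAlgEquiv (R : Type*) [CommSemiring R] (A : Type*) [Semiring A] [Algebra R A] :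
    ULift A ≃ₐ[R] A :=
  { ULift.ringEquiv with commutes' := fun _ => rfl }

theorem sym_existsUnique {R : Type u} [CommRing R] {M : Type v} [AddCommGroup M]
    [Module R M] {A : Type w} [CommRing A] [Algebra R A] {ι : M →ₗ[R] A}
    (h : IsSymmetricAlgebraUP ι) {C : Type*} [CommRing C] [Algebra R C]
    {C' : Type (max u v w)} [CommRing C'] [Algebra R C'] (j : C' ≃ₐ[R] C)
    (f : M →ₗ[R] C) : ∃! g : A →ₐ[R] C, ∀ m : M, g (ι m) = f m := by
  obtain ⟨g, hg, hu⟩ := h C' (j.symm.toLinearMap ∘ₗ f)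
  refine ⟨j.toAlgHom.comp g, fun m => by simp [hg m], fun g' hg' => ?_⟩
  have h2 : (j.symm.toAlgHom.comp g') = g := hu _ (fun m => by simp [hg' m])
  ext a
  rw [← h2]
  simp

open TrivSqZeroExt in
/-- `Sym_R(M) ≅ Sym_R(N)` as `R`-algebras iff `M ≅ N` as `R`-modules. -/
theorem stmt2 {R : Type u} [CommRing R]
    {M : Type v} [AddCommGroup M] [Module R M] [Module.Finite R M]
    {N : Type v} [AddCommGroup N] [Module R N] [Module.Finite R N]
    {A₁ : Type w} [CommRing A₁] [Algebra R A₁] (ι₁ : M →ₗ[R] A₁)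
    (h₁ : IsSymmetricAlgebraUP ι₁)
    {A₂ : Type w} [CommRing A₂] [Algebra R A₂] (ι₂ : N →ₗ[R] A₂)
    (h₂ : IsSymmetricAlgebraUP ι₂) :
    Nonempty (A₁ ≃ₐ[R] A₂) ↔ Nonempty (M ≃ₗ[R] N) := by
  constructor
  · rintro ⟨e⟩
    letI : Module Rᵐᵒᵖ M := Module.compHom M ((RingHom.id R).fromOpposite mul_comm)
    letI : IsCentralScalar R M := ⟨fun _ _ => rfl⟩
    letI : Module Rᵐᵒᵖ N := Module.compHom N ((RingHom.id R).fromOpposite mul_comm)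
    letI : IsCentralScalar R N := ⟨fun _ _ => rfl⟩
    set u : A₁ →ₐ[R] A₂ := e.toAlgHom with hu_def
    set v : A₂ →ₐ[R] A₁ := e.symm.toAlgHom with hv_def
    -- P : A₁ → R ⊕ M, extending m ↦ (0, m)
    obtain ⟨P, hP, -⟩ := sym_existsUnique h₁
      (uliftAlgEquiv R (TrivSqZeroExt R M)) (inrHom R M)
    set c : N →ₗ[R] R :=
      (fstHom R R M).toLinearMap ∘ₗ P.toLinearMap ∘ₗ v.toLinearMap ∘ₗ ι₂ with hc_def
    -- Q : A₂ → R ⊕ N, extending n ↦ (c n, n)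
    obtain ⟨Q, hQ, -⟩ := sym_existsUnique h₂
      (uliftAlgEquiv R (TrivSqZeroExt R N))
      (Algebra.linearMap R (TrivSqZeroExt R N) ∘ₗ c + inrHom R N)
    set φ : M →ₗ[R] N :=
      sndHom R N ∘ₗ Q.toLinearMap ∘ₗ u.toLinearMap ∘ₗ ι₁ with hφ_def
    set φ' : N →ₗ[R] M :=
      sndHom R M ∘ₗ P.toLinearMap ∘ₗ v.toLinearMap ∘ₗ ι₂ with hφ'_def
    have key1 : (TrivSqZeroExt.map φ').comp Q = P.comp v := by
      obtain ⟨G0, -, hGu⟩ := sym_existsUnique h₂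
        (uliftAlgEquiv R (TrivSqZeroExt R M))
        (P.toLinearMap ∘ₗ v.toLinearMap ∘ₗ ι₂)
      rw [hGu ((TrivSqZeroExt.map φ').comp Q) ?_, hGu (P.comp v) (fun n => rfl)]
      intro n
      rw [AlgHom.comp_apply, hQ n]
      refine TrivSqZeroExt.ext ?_ ?_ <;>
        simp [TrivSqZeroExt.algebraMap_eq_inl, hc_def, hφ'_def]
    have left : ∀ m, φ' (φ m) = m := by
      intro m
      have h3 : P (ι₁ m) = (TrivSqZeroExt.map φ') (Q (u (ι₁ m))) := by
        conv_lhs => rw [show (ι₁ m : A₁) = v (u (ι₁ m)) from (e.symm_apply_apply _).symm]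
        rw [← AlgHom.comp_apply, ← key1, AlgHom.comp_apply]
      have h4 := congrArg (TrivSqZeroExt.snd) h3
      rw [hP m] at h4
      simpa [hφ_def, hφ'_def] using h4.symm
    -- other direction
    set d : M →ₗ[R] R :=
      (fstHom R R N).toLinearMap ∘ₗ Q.toLinearMap ∘ₗ u.toLinearMap ∘ₗ ι₁ with hd_def
    obtain ⟨P', hP', -⟩ := sym_existsUnique h₁
      (uliftAlgEquiv R (TrivSqZeroExt R M))
      (Algebra.linearMap R (TrivSqZeroExt R M) ∘ₗ d + inrHom R M)
    set φ'' : N →ₗ[R] M :=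
      sndHom R M ∘ₗ P'.toLinearMap ∘ₗ v.toLinearMap ∘ₗ ι₂ with hφ''_def
    have key2 : (TrivSqZeroExt.map φ).comp P' = Q.comp u := by
      obtain ⟨G0, -, hGu⟩ := sym_existsUnique h₁
        (uliftAlgEquiv R (TrivSqZeroExt R N))
        (Q.toLinearMap ∘ₗ u.toLinearMap ∘ₗ ι₁)
      rw [hGu ((TrivSqZeroExt.map φ).comp P') ?_, hGu (Q.comp u) (fun m => rfl)]
      intro m
      rw [AlgHom.comp_apply, hP' m]
      refine TrivSqZeroExt.ext ?_ ?_ <;>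
        simp [TrivSqZeroExt.algebraMap_eq_inl, hd_def, hφ_def]
    have right : ∀ n, φ (φ'' n) = n := by
      intro n
      have h3 : Q (ι₂ n) = (TrivSqZeroExt.map φ) (P' (v (ι₂ n))) := by
        conv_lhs => rw [show (ι₂ n : A₂) = u (v (ι₂ n)) from (e.apply_symm_apply _).symm]
        rw [← AlgHom.comp_apply, ← key2, AlgHom.comp_apply]
      have h4 := congrArg (TrivSqZeroExt.snd) h3
      rw [hQ n] at h4
      simpa [TrivSqZeroExt.algebraMap_eq_inl, hφ''_def] using h4.symm
    have hright' : ∀ n, φ (φ' n) = n := by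
      intro n
      have : φ' n = φ'' n := by
        conv_lhs => rw [← right n, left (φ'' n)]
      rw [this, right n]
    exact ⟨LinearEquiv.ofLinear φ φ'
      (LinearMap.ext hright') (LinearMap.ext left)⟩
  · rintro ⟨σ⟩
    obtain ⟨F, hF, -⟩ := sym_existsUnique h₁ (uliftAlgEquiv R A₂) (ι₂ ∘ₗ σ.toLinearMap)
    obtain ⟨G, hG, -⟩ := sym_existsUnique h₂ (uliftAlgEquiv R A₁) (ι₁ ∘ₗ σ.symm.toLinearMap)
    obtain ⟨U₁, -, hU₁⟩ := sym_existsUnique h₁ (uliftAlgEquiv R A₁) ι₁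
    obtain ⟨U₂, -, hU₂⟩ := sym_existsUnique h₂ (uliftAlgEquiv R A₂) ι₂
    have gf : G.comp F = AlgHom.id R A₁ := by
      rw [hU₁ (G.comp F) (fun m => by simp [hF m, hG (σ m)]),
        hU₁ (AlgHom.id R A₁) (fun m => rfl)]
    have fg : F.comp G = AlgHom.id R A₂ := by
      rw [hU₂ (F.comp G) (fun n => by simp [hG n, hF (σ.symm n)]),
        hU₂ (AlgHom.id R A₂) (fun n => rfl)]
    exact ⟨AlgEquiv.ofAlgHom F G fg gf⟩
end

section
/- Let R be a commutative ring, A = R[Z_1,...,Z_n], S a multiplicatively closed subset of R consisting of non-zerodivisors of R, and P ∈ A. If P is a coordinate in S^{-1}A over S^{-1}R, then there exists an R-linear exponential map φ_W : A → A[W] and an element a ∈ S such that φ_W(P) = aW + P. -/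
set_option maxHeartbeats 1600000

open Polynomial



section Tau

variable {K : Type*} [CommRing K] {n : ℕ}

/-- translation in the `i`-th variable. -/
noncomputable def tau (i : Fin n) :
    MvPolynomial (Fin n) K →ₐ[K] Polynomial (MvPolynomial (Fin n) K) :=
  MvPolynomial.aeval fun j =>
    Polynomial.C (MvPolynomial.X j) + if j = i then Polynomial.X else 0

lemma tau_X (i j : Fin n) :
    tau (K := K) i (MvPolynomial.X j)
      = Polynomial.C (MvPolynomial.X j) + if j = i then Polynomial.X else 0 := by
  simp [tau]

lemma tau_C (i : Fin n) (k : K) :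
    tau (K := K) i (MvPolynomial.C k) = Polynomial.C (MvPolynomial.C k) := by
  simp [tau, MvPolynomial.algebraMap_eq, Polynomial.algebraMap_apply]

lemma isExpMap_tau (i : Fin n) : IsExpMap (tau (K := K) i) := by
  constructor
  · intro a
    have : (Polynomial.evalRingHom (0 : MvPolynomial (Fin n) K)).comp
        ((tau (K := K) i) : MvPolynomial (Fin n) K →+* Polynomial (MvPolynomial (Fin n) K))
        = RingHom.id _ := by
      apply MvPolynomial.ringHom_ext
      · intro r; simp [tau_C]
      · intro j
        simp [tau_X]
        split <;> simp
    simpa using DFunLike.congr_fun this a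
  · intro a
    have : (Polynomial.mapRingHom
          ((tau (K := K) i) : MvPolynomial (Fin n) K →+* Polynomial (MvPolynomial (Fin n) K))).comp
        ((tau (K := K) i) : MvPolynomial (Fin n) K →+* Polynomial (MvPolynomial (Fin n) K))
        = (Polynomial.eval₂RingHom
            (S := Polynomial (Polynomial (MvPolynomial (Fin n) K)))
            ((Polynomial.C).comp Polynomial.C)
            (Polynomial.X + Polynomial.C Polynomial.X)).comp
            ((tau (K := K) i) : MvPolynomial (Fin n) K →+* Polynomial (MvPolynomial (Fin n) K)) := by
      apply MvPolynomial.ringHom_ext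
      · intro r; simp [tau_C]
      · intro j
        by_cases hj : j = i <;>
          simp [tau_X, hj, tau_C, Polynomial.eval₂_add] <;> ring
    simpa using DFunLike.congr_fun this a

end Tau

section Conj

variable {K B : Type*} [CommRing K] [CommRing B] [Algebra K B]

lemma isExpMap_conj (δ : B →ₐ[K] Polynomial B) (h : IsExpMap δ) (e : B ≃ₐ[K] B) :
    IsExpMap ((Polynomial.mapAlgHom e.toAlgHom).comp (δ.comp e.symm.toAlgHom)) := by
  set φ := (Polynomial.mapAlgHom e.toAlgHom).comp (δ.comp e.symm.toAlgHom) with hφ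
  have hφa : ∀ b : B, φ b = (δ (e.symm b)).map (e : B →+* B) := fun b => rfl
  constructor
  · intro b
    rw [hφa, Polynomial.eval_map, Polynomial.eval₂_at_zero, Polynomial.coeff_zero_eq_eval_zero,
      h.1 (e.symm b)]
    exact e.apply_symm_apply b
  · intro b
    have key : ((φ : B →+* Polynomial B).comp (e : B →+* B)) =
        (Polynomial.mapRingHom (e : B →+* B)).comp (δ : B →+* Polynomial B) := by
      ext x
      · simp [hφa]
      all_goals simp [hφa]
    calc (φ b).map (φ : B →+* Polynomial B)
        = ((δ (e.symm b)).map (e : B →+* B)).map (φ : B →+* Polynomial B) := by rw [hφa]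
      _ = (δ (e.symm b)).map ((φ : B →+* Polynomial B).comp (e : B →+* B)) := by
          rw [Polynomial.map_map]
      _ = (δ (e.symm b)).map ((Polynomial.mapRingHom (e : B →+* B)).comp (δ : B →+* Polynomial B)) := by
          rw [key]
      _ = ((δ (e.symm b)).map (δ : B →+* Polynomial B)).map (Polynomial.mapRingHom (e : B →+* B)) := by
          rw [Polynomial.map_map]
      _ = (Polynomial.eval₂ ((Polynomial.C).comp (Polynomial.C : B →+* Polynomial B))
            (Polynomial.X + Polynomial.C Polynomial.X) (δ (e.symm b))).map
            (Polynomial.mapRingHom (e : B →+* B)) := by rw [h.2]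
      _ = Polynomial.eval₂ ((Polynomial.C).comp (Polynomial.C : B →+* Polynomial B))
            (Polynomial.X + Polynomial.C Polynomial.X) (φ b) := by
          rw [hφa, Polynomial.eval₂_map]
          rw [← Polynomial.coe_mapRingHom, Polynomial.hom_eval₂]
          congr 1
          · ext x <;> simp
          · simp

end Conj

section Scale

variable {K B : Type*} [CommRing K] [CommRing B] [Algebra K B]

/-- substitute `W ↦ c·W`. -/
noncomputable def scaleW (c : B) : Polynomial B →+* Polynomial B :=
  Polynomial.eval₂RingHom Polynomial.C (Polynomial.C c * Polynomial.X)

lemma scaleW_C (c b : B) : scaleW c (Polynomial.C b) = Polynomial.C b :=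
  Polynomial.eval₂_C _ _

lemma scaleW_X (c : B) : scaleW c Polynomial.X = Polynomial.C c * Polynomial.X :=
  Polynomial.eval₂_X _ _

lemma scaleW_apply (c : B) (p : Polynomial B) :
    scaleW c p = Polynomial.eval₂ Polynomial.C (Polynomial.C c * Polynomial.X) p := rfl

lemma coeff_scaleW (c : B) (p : Polynomial B) (k : ℕ) :
    (scaleW c p).coeff k = c ^ k * p.coeff k := by
  induction p using Polynomial.induction_on' with
  | add p q hp hq => simp [hp, hq, mul_add]
  | monomial m a =>
      rw [scaleW_apply, Polynomial.eval₂_monomial, mul_pow, ← Polynomial.C_pow, ← mul_assoc,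
        ← Polynomial.C_mul]
      rw [Polynomial.coeff_C_mul, Polynomial.coeff_X_pow, Polynomial.coeff_monomial]
      by_cases h : k = m
      · subst h
        simp
        ring
      · simp [h, Ne.symm h]

lemma scaleW_eval_zero (c : B) (p : Polynomial B) :
    (scaleW c p).eval 0 = p.eval 0 := by
  rw [← Polynomial.coeff_zero_eq_eval_zero, ← Polynomial.coeff_zero_eq_eval_zero,
    coeff_scaleW, pow_zero, one_mul]

lemma scaleW_exp (δ : B →ₐ[K] Polynomial B) (h : IsExpMap δ) (c : B)
    (hc : δ c = Polynomial.C c) (b : B) :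
    (scaleW c (δ b)).map ((scaleW c).comp (δ : B →+* Polynomial B)) =
      Polynomial.eval₂ ((Polynomial.C).comp (Polynomial.C : B →+* Polynomial B))
        (Polynomial.X + Polynomial.C Polynomial.X) (scaleW c (δ b)) := by
  set q := δ b with hq
  -- the scaling on both variables
  set t : Polynomial (Polynomial B) →+* Polynomial (Polynomial B) :=
    Polynomial.eval₂RingHom ((Polynomial.C).comp (scaleW c))
      (Polynomial.C (Polynomial.C c) * Polynomial.X) with ht
  have claimA : t (q.map (δ : B →+* Polynomial B)) =
      (scaleW c q).map ((scaleW c).comp (δ : B →+* Polynomial B)) := by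
    have map_eq : ∀ {A₁ A₂ : Type _} [CommRing A₁] [CommRing A₂] (g : A₁ →+* A₂)
        (p : Polynomial A₁), p.map g =
          Polynomial.eval₂ ((Polynomial.C).comp g) Polynomial.X p := fun g p => rfl
    rw [map_eq, Polynomial.hom_eval₂, map_eq,
      ← Polynomial.coe_eval₂RingHom
        ((Polynomial.C).comp ((scaleW c).comp (δ : B →+* Polynomial B))) Polynomial.X,
      scaleW_apply c q, Polynomial.hom_eval₂]
    congr 1
    · ext x
      simp [ht, hc, scaleW_C]
    · simp [ht, hc, scaleW_C]
  have claimB : t (Polynomial.eval₂ ((Polynomial.C).comp (Polynomial.C : B →+* Polynomial B))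
      (Polynomial.X + Polynomial.C Polynomial.X) q) =
      Polynomial.eval₂ ((Polynomial.C).comp (Polynomial.C : B →+* Polynomial B))
        (Polynomial.X + Polynomial.C Polynomial.X) (scaleW c q) := by
    rw [Polynomial.hom_eval₂,
      ← Polynomial.coe_eval₂RingHom (((Polynomial.C).comp (Polynomial.C : B →+* Polynomial B)))
        (Polynomial.X + Polynomial.C Polynomial.X),
      scaleW_apply c q, Polynomial.hom_eval₂]
    congr 1
    · ext x
      simp [ht, scaleW_C]
    · simp [ht, mul_add, scaleW_X, scaleW_C]
      try ring
  rw [← claimA, h.2 b, claimB]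

end Scale

section Range

lemma map_eval₂_CC {A B : Type*} [CommRing A] [CommRing B] (f : A →+* B) (p : Polynomial A) :
    Polynomial.map (Polynomial.mapRingHom f)
      (Polynomial.eval₂ ((Polynomial.C).comp (Polynomial.C : A →+* Polynomial A))
        (Polynomial.X + Polynomial.C Polynomial.X) p) =
    Polynomial.eval₂ ((Polynomial.C).comp (Polynomial.C : B →+* Polynomial B))
      (Polynomial.X + Polynomial.C Polynomial.X) (Polynomial.map f p) := by
  have h : (Polynomial.mapRingHom (Polynomial.mapRingHom f)).comp
      (Polynomial.eval₂RingHom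
        (S := Polynomial (Polynomial A))
        ((Polynomial.C).comp (Polynomial.C : A →+* Polynomial A))
        (Polynomial.X + Polynomial.C Polynomial.X)) =
      (Polynomial.eval₂RingHom
        (S := Polynomial (Polynomial B))
        ((Polynomial.C).comp (Polynomial.C : B →+* Polynomial B))
        (Polynomial.X + Polynomial.C Polynomial.X)).comp (Polynomial.mapRingHom f) := by
    apply Polynomial.ringHom_ext
    · intro x
      simp
    · simp
  simpa using DFunLike.congr_fun h p

lemma mvPolynomial_mem_range_of_isInteger {R K : Type*} [CommRing R] [CommRing K] [Algebra R K]
    {σ : Type*} (c : MvPolynomial σ K)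
    (h : ∀ m, IsLocalization.IsInteger R (c.coeff m)) :
    ∃ b : MvPolynomial σ R, MvPolynomial.map (algebraMap R K) b = c := by
  have h' : ∀ m, ∃ rr : R, algebraMap R K rr = c.coeff m := fun m => (h m).imp fun _ hr => hr
  choose r hr using h'
  refine ⟨∑ m ∈ c.support, MvPolynomial.monomial m (r m), ?_⟩
  rw [map_sum]
  simp_rw [MvPolynomial.map_monomial, hr]
  exact MvPolynomial.support_sum_monomial_coeff c

end Range

theorem stmt6_aux {R : Type*} [CommRing R] {n : ℕ} (S : Submonoid R)
    (hS : S ≤ nonZeroDivisors R) (K : Type*) [CommRing K] [Algebra R K] [IsLocalization S K]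
    (P : MvPolynomial (Fin n) R)
    (e : MvPolynomial (Fin n) K ≃ₐ[K] MvPolynomial (Fin n) K) (i : Fin n)
    (he : e (MvPolynomial.X i) = MvPolynomial.map (algebraMap R K) P) :
    ∃ a ∈ S, ∃ φ : MvPolynomial (Fin n) R →ₐ[R] Polynomial (MvPolynomial (Fin n) R),
      IsExpMap φ ∧
      φ P = Polynomial.C P + Polynomial.C (MvPolynomial.C a) * Polynomial.X := by
  classical
  set fR : MvPolynomial (Fin n) R →+* MvPolynomial (Fin n) K :=
    MvPolynomial.map (algebraMap R K) with hfR
  have hfinj : Function.Injective fR :=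
    MvPolynomial.map_injective _ (IsLocalization.injective (M := S) K hS)
  -- the exponential map over the localization
  set δ : MvPolynomial (Fin n) K →ₐ[K] Polynomial (MvPolynomial (Fin n) K) :=
    (Polynomial.mapAlgHom e.toAlgHom).comp ((tau i).comp e.symm.toAlgHom) with hδdef
  have hδ : IsExpMap δ := isExpMap_conj _ (isExpMap_tau i) e
  have hδC : ∀ x : K, δ (MvPolynomial.C x) = Polynomial.C (MvPolynomial.C x) := by
    intro x
    rw [← MvPolynomial.algebraMap_eq, AlgHom.commutes]
    simp [Polynomial.algebraMap_apply, MvPolynomial.algebraMap_eq]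
  have hδapp : ∀ b, δ b = Polynomial.map (e.toAlgHom.toRingHom) (tau i (e.symm b)) :=
    fun b => rfl
  have hδP : δ (fR P) = Polynomial.C (fR P) + Polynomial.X := by
    have h1 : e.symm (fR P) = MvPolynomial.X i := by
      rw [← he, AlgEquiv.symm_apply_apply]
    rw [hδapp, h1, tau_X, if_pos rfl]
    simp [he]
  -- clearing denominators
  set T : Finset (Fin n × ℕ × (Fin n →₀ ℕ)) :=
    Finset.univ.biUnion (fun j : Fin n => ((δ (fR (MvPolynomial.X j))).support).biUnion
      (fun k => (((δ (fR (MvPolynomial.X j))).coeff k).support).image (fun m => (j, k, m))))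
    with hT
  obtain ⟨a, ha⟩ := IsLocalization.exist_integer_multiples (M := S) (S := K) T
    (fun p : Fin n × ℕ × (Fin n →₀ ℕ) =>
      MvPolynomial.coeff p.2.2 ((δ (fR (MvPolynomial.X p.1))).coeff p.2.1))
  set a' : K := algebraMap R K a with ha'
  set c' : MvPolynomial (Fin n) K := MvPolynomial.C a' with hc'
  have hca : fR (MvPolynomial.C (a : R)) = c' := by simp [hfR, hc', ha']
  have H : ∀ (j : Fin n) (k : ℕ),
      c' * ((δ (fR (MvPolynomial.X j))).coeff k) ∈ fR.range := by
    intro j k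
    have hint : ∀ m, IsLocalization.IsInteger R
        (MvPolynomial.coeff m (c' * ((δ (fR (MvPolynomial.X j))).coeff k))) := by
      intro m
      rw [hc', MvPolynomial.coeff_C_mul, ha', ← Algebra.smul_def]
      by_cases hm : MvPolynomial.coeff m ((δ (fR (MvPolynomial.X j))).coeff k) = 0
      · rw [hm, smul_zero]
        exact IsLocalization.isInteger_zero
      have hk : k ∈ (δ (fR (MvPolynomial.X j))).support :=
        Polynomial.mem_support_iff.mpr fun h0 => hm (by simp [h0])
      have hmem : (j, k, m) ∈ T := by
        rw [hT]
        refine Finset.mem_biUnion.mpr ⟨j, Finset.mem_univ _, ?_⟩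
        refine Finset.mem_biUnion.mpr ⟨k, hk, ?_⟩
        exact Finset.mem_image.mpr ⟨m, MvPolynomial.mem_support_iff.mpr hm, rfl⟩
      have hval := ha (j, k, m) hmem
      exact hval
    obtain ⟨b, hb⟩ := mvPolynomial_mem_range_of_isInteger (R := R)
      (c' * ((δ (fR (MvPolynomial.X j))).coeff k)) hint
    exact ⟨b, hb⟩
  -- the coefficients of the scaled map lie in the image
  have hcoef : ∀ (j : Fin n) (k : ℕ),
      (scaleW c' (δ (fR (MvPolynomial.X j)))).coeff k ∈ fR.range := by
    intro j k
    rw [coeff_scaleW]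
    cases k with
    | zero =>
        rw [pow_zero, one_mul, Polynomial.coeff_zero_eq_eval_zero, hδ.1]
        exact ⟨MvPolynomial.X j, rfl⟩
    | succ k =>
        rw [pow_succ, mul_assoc]
        exact mul_mem (pow_mem (RingHom.mem_range.mpr ⟨MvPolynomial.C (a : R), hca⟩) k)
          (H j (k + 1))
  have hgex : ∀ j : Fin n, ∃ g : Polynomial (MvPolynomial (Fin n) R),
      Polynomial.map fR g = scaleW c' (δ (fR (MvPolynomial.X j))) := by
    intro j
    obtain ⟨g, hg⟩ := (Polynomial.mem_map_range fR).mpr (hcoef j)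
    exact ⟨g, hg⟩
  choose g hg using hgex
  set φ : MvPolynomial (Fin n) R →ₐ[R] Polynomial (MvPolynomial (Fin n) R) :=
    MvPolynomial.aeval g with hφdef
  have hφC : ∀ r : R, φ (MvPolynomial.C r) = Polynomial.C (MvPolynomial.C r) := by
    intro r
    rw [hφdef, MvPolynomial.aeval_C]
    simp [Polynomial.algebraMap_apply, MvPolynomial.algebraMap_eq]
  have hφX : ∀ j, φ (MvPolynomial.X j) = g j := by
    intro j
    rw [hφdef, MvPolynomial.aeval_X]
  have hcomm : (Polynomial.mapRingHom fR).comp (φ : _ →+* _) =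
      ((scaleW c').comp (δ : _ →+* _)).comp fR := by
    apply MvPolynomial.ringHom_ext
    · intro r
      simp only [RingHom.comp_apply, RingHom.coe_coe, AlgHom.coe_toRingHom,
        Polynomial.coe_mapRingHom]
      rw [hφC, Polynomial.map_C, show fR (MvPolynomial.C r) = MvPolynomial.C (algebraMap R K r)
        from MvPolynomial.map_C _ _, hδC, scaleW_C]
    · intro j
      simp only [RingHom.comp_apply, RingHom.coe_coe, AlgHom.coe_toRingHom,
        Polynomial.coe_mapRingHom]
      rw [hφX]
      exact hg j
  have happ : ∀ x, Polynomial.map fR (φ x) = scaleW c' (δ (fR x)) :=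
    fun x => DFunLike.congr_fun hcomm x
  have hδc' : δ c' = Polynomial.C c' := hδC a'
  refine ⟨a, a.2, φ, ⟨?_, ?_⟩, ?_⟩
  · -- eval at 0
    intro x
    apply hfinj
    have : fR ((φ x).eval 0) = (Polynomial.map fR (φ x)).eval 0 := by
      rw [Polynomial.eval_map, Polynomial.eval₂_at_zero, Polynomial.coeff_zero_eq_eval_zero]
    rw [this, happ, scaleW_eval_zero, hδ.1]
  · -- exponential property
    intro x
    apply Polynomial.map_injective (Polynomial.mapRingHom fR)
      (Polynomial.map_injective fR hfinj)
    rw [Polynomial.map_map, hcomm, ← Polynomial.map_map, happ x,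
      scaleW_exp δ hδ c' hδc' (fR x), map_eval₂_CC, happ x]
  · -- value on P
    apply Polynomial.map_injective fR hfinj
    rw [happ, hδP]
    simp only [Polynomial.map_add, Polynomial.map_mul, Polynomial.map_C, Polynomial.map_X,
      map_add, map_mul]
    rw [scaleW_C, scaleW_X, hca]


/-- if `P` is a coordinate after inverting a multiplicative set of
non-zerodivisors, there is an exponential map `φ_W` with `φ_W(P) = aW + P`, `a ∈ S`. -/
theorem stmt6 {R : Type*} [CommRing R] {n : ℕ} (S : Submonoid R)
    (hS : S ≤ nonZeroDivisors R) (P : MvPolynomial (Fin n) R)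
    (hP : IsCoordinate (MvPolynomial.map (algebraMap R (Localization S)) P)) :
    ∃ a ∈ S, ∃ φ : MvPolynomial (Fin n) R →ₐ[R] Polynomial (MvPolynomial (Fin n) R),
      IsExpMap φ ∧
      φ P = Polynomial.C P + Polynomial.C (MvPolynomial.C a) * Polynomial.X := by
  obtain ⟨e, i, he⟩ := hP
  exact stmt6_aux S hS (Localization S) P e i he
end

section
/- Let R be a commutative ring, a a non-zerodivisor of R, and P ∈ R[Z_1,...,Z_n]. Suppose the image of P is an m-stable coordinate in (R/aR)[Z_1,...,Z_n]. Then F := aW + P is a (2m + n - 1)-stable coordinate in R[Z_1,...,Z_n,W]. -/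
open MvPolynomial

section Key

variable {R : Type*} [CommRing R]

private lemma C_nzd {ι : Type*} {a : R} (ha : a ∈ nonZeroDivisors R)
    {p : MvPolynomial ι R} (h : C a * p = 0) : p = 0 := by
  ext mo
  have h2 := congrArg (coeff mo) h
  rw [coeff_C_mul, coeff_zero] at h2
  have := (mem_nonZeroDivisors_iff.mp ha).2 (coeff mo p) (by rwa [mul_comm] at h2)
  simpa using this

private lemma key_half {ι : Type*} {a : R} (ha : a ∈ nonZeroDivisors R)
    (σX τX : ι → MvPolynomial ι R) (u v : ι → MvPolynomial (ι ⊕ ι) R)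
    (Hu : ∀ j, aeval (fun k => rename Sum.inl (τX k) + C a * X (Sum.inr k)) (σX j)
      = X (Sum.inl j) + C a * u j)
    (Hv : ∀ j, aeval (fun k => rename Sum.inl (σX k) + C a * X (Sum.inr k)) (τX j)
      = X (Sum.inl j) + C a * v j) :
    (aeval (Sum.elim (fun j => rename Sum.inl (τX j) + C a * X (Sum.inr j))
        (fun j => - u j))).comp
      (aeval (Sum.elim (fun j => rename Sum.inl (σX j) + C a * X (Sum.inr j))
        (fun j => - v j)))
      = AlgHom.id R (MvPolynomial (ι ⊕ ι) R) := by
  set φf : ι ⊕ ι → MvPolynomial (ι ⊕ ι) R :=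
    Sum.elim (fun j => rename Sum.inl (τX j) + C a * X (Sum.inr j)) (fun j => - u j) with hφf
  set θf : ι ⊕ ι → MvPolynomial (ι ⊕ ι) R :=
    Sum.elim (fun j => rename Sum.inl (σX j) + C a * X (Sum.inr j)) (fun j => - v j) with hθf
  have fact1 : ∀ k, aeval φf (rename Sum.inl (σX k)) = X (Sum.inl k) + C a * u k := by
    intro k
    rw [aeval_rename]
    simpa [hφf, Function.comp] using Hu k
  have fact2 : ∀ k, aeval φf (θf (Sum.inl k)) = X (Sum.inl k) := by
    intro k
    simp only [hθf, Sum.elim_inl, map_add, map_mul, fact1, aeval_X, aeval_C,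
      MvPolynomial.algebraMap_eq, hφf, Sum.elim_inr]
    rw [← hφf, fact1]
    ring
  have fact4 : ∀ j, aeval φf (v j) = - X (Sum.inr j) := by
    intro j
    have h1 := congrArg (aeval φf) (Hv j)
    rw [comp_aeval_apply] at h1
    have h2 : (fun k => aeval φf (rename Sum.inl (σX k) + C a * X (Sum.inr k)))
        = fun k => X (Sum.inl k) := by
      funext k
      simp only [map_add, map_mul, fact1, aeval_X, aeval_C,
        MvPolynomial.algebraMap_eq, hφf, Sum.elim_inr]
      rw [← hφf, fact1]
      ring
    rw [h2] at h1
    have h3 : aeval (fun k : ι => (X (Sum.inl k) : MvPolynomial (ι ⊕ ι) R)) (τX j)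
        = rename Sum.inl (τX j) := by
      rw [show (fun k : ι => (X (Sum.inl k) : MvPolynomial (ι ⊕ ι) R))
        = (X ∘ Sum.inl) from rfl]
      rw [rename_eq_aeval]
    rw [h3] at h1
    simp only [map_add, map_mul, aeval_X, aeval_C] at h1
    have h4 : C a * (X (Sum.inr j) + aeval φf (v j)) = 0 := by
      rw [MvPolynomial.algebraMap_eq] at h1
      have hφl : φf (Sum.inl j) = rename Sum.inl (τX j) + C a * X (Sum.inr j) := rfl
      rw [hφl] at h1
      linear_combination -h1
    have h5 := C_nzd ha h4
    linear_combination h5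
  apply MvPolynomial.algHom_ext
  rintro (k | k)
  · simp only [AlgHom.coe_comp, Function.comp_apply, aeval_X, AlgHom.id_apply]
    exact fact2 k
  · simp only [AlgHom.coe_comp, Function.comp_apply, aeval_X, AlgHom.id_apply]
    simp only [hθf, Sum.elim_inr, map_neg, fact4, neg_neg]

private lemma key {ι : Type*} {a : R} (ha : a ∈ nonZeroDivisors R)
    (σX τX : ι → MvPolynomial ι R) (u v : ι → MvPolynomial (ι ⊕ ι) R)
    (Hu : ∀ j, aeval (fun k => rename Sum.inl (τX k) + C a * X (Sum.inr k)) (σX j)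
      = X (Sum.inl j) + C a * u j)
    (Hv : ∀ j, aeval (fun k => rename Sum.inl (σX k) + C a * X (Sum.inr k)) (τX j)
      = X (Sum.inl j) + C a * v j) :
    ∃ e : MvPolynomial (ι ⊕ ι) R ≃ₐ[R] MvPolynomial (ι ⊕ ι) R,
      ∀ j, e (X (Sum.inl j)) = rename Sum.inl (σX j) + C a * X (Sum.inr j) := by
  refine ⟨AlgEquiv.ofAlgHom
    (aeval (Sum.elim (fun j => rename Sum.inl (σX j) + C a * X (Sum.inr j)) (fun j => - v j)))
    (aeval (Sum.elim (fun j => rename Sum.inl (τX j) + C a * X (Sum.inr j)) (fun j => - u j)))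
    (key_half ha τX σX v u Hv Hu) (key_half ha σX τX u v Hu Hv), fun j => ?_⟩
  simp only [AlgEquiv.ofAlgHom_apply, aeval_X, Sum.elim_inl]

private lemma map_aeval'' {ι κ : Type*} {S : Type*} [CommRing S] (f : R →+* S)
    (g : ι → MvPolynomial κ R) (p : MvPolynomial ι R) :
    map f (aeval g p) = aeval (fun k => map f (g k)) (map f p) := by
  induction p using MvPolynomial.induction_on with
  | C r => simp
  | add p q hp hq => simp only [map_add, hp, hq]
  | mul_X p k hp => simp only [map_mul, aeval_X, map_X, hp]

private lemma lift_div {ι : Type*} {a : R}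
    (ε : MvPolynomial ι (R ⧸ Ideal.span {a}) ≃ₐ[R ⧸ Ideal.span {a}]
      MvPolynomial ι (R ⧸ Ideal.span {a}))
    (A B : ι → MvPolynomial ι R)
    (hA : ∀ j, map (Ideal.Quotient.mk (Ideal.span {a})) (A j) = ε (X j))
    (hB : ∀ j, map (Ideal.Quotient.mk (Ideal.span {a})) (B j) = ε.symm (X j)) (j : ι) :
    ∃ w, aeval (fun k => rename Sum.inl (B k) + C a * X (Sum.inr k)) (A j)
      = X (Sum.inl j) + C a * w := by
  set mk := Ideal.Quotient.mk (Ideal.span {a}) with hmk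
  set g : ι → MvPolynomial (ι ⊕ ι) R :=
    fun k => rename Sum.inl (B k) + C a * X (Sum.inr k) with hg
  have hma : mk a = 0 := by
    rw [hmk, Ideal.Quotient.eq_zero_iff_mem]
    exact Ideal.mem_span_singleton_self a
  have hmg : ∀ k, map mk (g k) = rename Sum.inl (ε.symm (X k)) := by
    intro k
    simp only [hg, map_add, map_mul, map_C, MvPolynomial.map_X, map_rename, hB, hma,
      MvPolynomial.C_0, zero_mul, add_zero]
  have h0 : map mk (aeval g (A j)) = X (Sum.inl j) := by
    rw [map_aeval'']
    have : (fun k => map mk (g k)) = fun k => rename Sum.inl (ε.symm (X k)) := funext hmg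
    rw [this, hA]
    have hcomp : (aeval (fun k => rename Sum.inl (ε.symm (X k)) :
        ι → MvPolynomial (ι ⊕ ι) (R ⧸ Ideal.span {a}))) =
        ((rename Sum.inl).comp (ε.symm : MvPolynomial ι (R ⧸ Ideal.span {a}) →ₐ[R ⧸ Ideal.span {a}] MvPolynomial ι (R ⧸ Ideal.span {a}))) := by
      apply MvPolynomial.algHom_ext
      intro k
      simp
    rw [hcomp]
    simp
  have hker : aeval g (A j) - X (Sum.inl j) ∈
      RingHom.ker (map mk : MvPolynomial (ι ⊕ ι) R →+* MvPolynomial (ι ⊕ ι) (R ⧸ Ideal.span {a})) := by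
    rw [RingHom.mem_ker, map_sub, h0, MvPolynomial.map_X, sub_self]
  rw [MvPolynomial.ker_map, Ideal.mk_ker, Ideal.map_span, Set.image_singleton] at hker
  obtain ⟨w, hw⟩ := Ideal.mem_span_singleton'.mp hker
  exact ⟨w, by linear_combination -hw⟩

end Key

theorem stmt12' {R : Type*} [CommRing R] (a : R) (ha : a ∈ nonZeroDivisors R)
    {n : ℕ} (P : MvPolynomial (Fin n) R) (m : ℕ)
    (hP : ∃ (e : MvPolynomial (Fin (n+m)) (R ⧸ Ideal.span {a}) ≃ₐ[R ⧸ Ideal.span {a}] MvPolynomial (Fin (n+m)) (R ⧸ Ideal.span {a})) (i : Fin (n+m)),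
      e (X i) = (rename (Fin.castAdd m) (map (Ideal.Quotient.mk (Ideal.span {a})) P))) :
    ∃ (e : MvPolynomial (Fin ((n + 1) + (2 * m + n - 1))) R ≃ₐ[R] MvPolynomial (Fin ((n + 1) + (2 * m + n - 1))) R) (i : Fin ((n + 1) + (2 * m + n - 1))),
      e (X i) = (rename (Fin.castAdd (2 * m + n - 1))
        (C a * X (Fin.last n) + rename Fin.castSucc P : MvPolynomial (Fin (n + 1)) R)) := by
  classical
  obtain ⟨ε, i, hi⟩ := hP
  have hpos : 0 < n + m := i.pos
  set mk := Ideal.Quotient.mk (Ideal.span {a}) with hmk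
  have hsurj : Function.Surjective
      (map mk : MvPolynomial (Fin (n+m)) R → MvPolynomial (Fin (n+m)) (R ⧸ Ideal.span {a})) :=
    map_surjective _ Ideal.Quotient.mk_surjective
  set σX : Fin (n+m) → MvPolynomial (Fin (n+m)) R :=
    fun j => if j = i then rename (Fin.castAdd m) P else (hsurj (ε (X j))).choose with hσX
  have hσ : ∀ j, map mk (σX j) = ε (X j) := by
    intro j
    by_cases h : j = i
    · subst h
      simp only [hσX, if_pos rfl]
      rw [map_rename, ← hi]
    · simp only [hσX, if_neg h]
      exact (hsurj (ε (X j))).choose_spec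
  set τX : Fin (n+m) → MvPolynomial (Fin (n+m)) R :=
    fun j => (hsurj (ε.symm (X j))).choose with hτX
  have hτ : ∀ j, map mk (τX j) = ε.symm (X j) := fun j => (hsurj _).choose_spec
  have hσ' : ∀ j, map mk (σX j) = ε.symm.symm (X j) := by simpa using hσ
  choose u hu using fun j => lift_div ε σX τX hσ hτ j
  choose v hv using fun j => lift_div ε.symm τX σX hτ hσ' j
  obtain ⟨e, he⟩ := key ha σX τX u v hu hv
  -- index bookkeeping
  set K := 2 * m + n - 1 with hKdef
  have h1 : 1 + (n + m - 1) = n + m := by omega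
  have hK : K = m + (n + m - 1) := by omega
  let z : Fin (n + m) := finCongr h1 (Fin.castAdd (n + m - 1) (0 : Fin 1))
  let q : Fin ((n+1) + K) ≃ (Fin (n+m) ⊕ Fin (n+m)) :=
    (finSumFinEquiv.symm : Fin ((n+1) + K) ≃ (Fin (n+1) ⊕ Fin K)).trans <|
      (Equiv.sumCongr (finSumFinEquiv.symm : Fin (n+1) ≃ (Fin n ⊕ Fin 1))
        (((finCongr hK).trans finSumFinEquiv.symm : Fin K ≃ (Fin m ⊕ Fin (n + m - 1))))).trans <|
      (Equiv.sumSumSumComm (Fin n) (Fin 1) (Fin m) (Fin (n + m - 1))).trans <|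
      Equiv.sumCongr (finSumFinEquiv : (Fin n ⊕ Fin m) ≃ Fin (n+m))
        (((finSumFinEquiv.trans (finCongr h1)).trans (Equiv.swap z i) :
          (Fin 1 ⊕ Fin (n + m - 1)) ≃ Fin (n+m)))
  have hq1 : ∀ j : Fin n, q (Fin.castAdd K (Fin.castSucc j)) = Sum.inl (Fin.castAdd m j) := by
    intro j
    have hcs : Fin.castSucc j = Fin.castAdd 1 j := rfl
    simp [q, hcs, Equiv.sumSumSumComm]
  have hq2 : q (Fin.castAdd K (Fin.last n)) = Sum.inr i := by
    have hlast : Fin.last n = Fin.natAdd n (0 : Fin 1) := by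
      ext; simp
    rw [hlast]
    simp [q, z, Equiv.sumSumSumComm]
  refine ⟨((renameEquiv R q).trans e).trans (renameEquiv R q.symm), q.symm (Sum.inl i), ?_⟩
  have hx : (renameEquiv R q) (X (q.symm (Sum.inl i))) = X (Sum.inl i) := by simp
  rw [AlgEquiv.trans_apply, AlgEquiv.trans_apply, hx, he i]
  have hσi : σX i = rename (Fin.castAdd m) P := by simp [hσX]
  rw [hσi]
  have hq2' : q.symm (Sum.inr i) = Fin.castAdd K (Fin.last n) := by
    rw [Equiv.symm_apply_eq]; exact hq2.symm
  have hq1' : (⇑q.symm ∘ Sum.inl ∘ Fin.castAdd m : Fin n → Fin ((n+1)+K))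
      = (Fin.castAdd K ∘ Fin.castSucc) := by
    funext j
    simp only [Function.comp_apply]
    rw [Equiv.symm_apply_eq]
    exact (hq1 j).symm
  simp only [renameEquiv_apply, map_add, map_mul, rename_C, rename_X, rename_rename]
  rw [hq2', hq1']
  ring

/-- if the image of `P` is an `m`-stable coordinate mod a non-zerodivisor `a`,
then `aW + P` is a `(2m + n - 1)`-stable coordinate. -/
theorem stmt12 {R : Type*} [CommRing R] (a : R) (ha : a ∈ nonZeroDivisors R)
    {n : ℕ} (P : MvPolynomial (Fin n) R) (m : ℕ)
    (hP : IsCoordinate (MvPolynomial.rename (Fin.castAdd m)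
      (MvPolynomial.map (Ideal.Quotient.mk (Ideal.span {a})) P) :
        MvPolynomial (Fin (n + m)) (R ⧸ Ideal.span {a}))) :
    IsCoordinate (MvPolynomial.rename (Fin.castAdd (2 * m + n - 1))
      (MvPolynomial.C a * MvPolynomial.X (Fin.last n) +
        MvPolynomial.rename Fin.castSucc P : MvPolynomial (Fin (n + 1)) R) :
          MvPolynomial (Fin ((n + 1) + (2 * m + n - 1))) R) := by
  exact stmt12' a ha P m hP
end
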